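/- Let d ≥ 1 and k ≥ 1. The real linear span of the set of functions { x ↦ (Σ_{i=1}^d α_i x_i)^k : α ∈ ℝ^d } from ℝ^d to ℝ equals the space of all homogeneous polynomial functions of degree k on ℝ^d, i.e. the span of the monomial functions x ↦ x_1^{β_1}···x_d^{β_d} over all β ∈ ℕ₀^d with β_1 + … + β_d = k. -/
import Mathlib

open Finset

private lemma neg_one_pow_sub_real {n r : ℕ} (h : r ≤ n) :
    (-1:ℝ)^(n-r) = (-1)^n * (-1)^r := by
  have h1 : (-1:ℝ)^(n-r) * (-1)^r = (-1)^n := by rw [← pow_add, Nat.sub_add_cancel h]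
  have h2 : (-1:ℝ)^r * (-1)^r = 1 := by
    rw [← pow_add, Even.neg_one_pow ⟨r, rfl⟩]
  calc (-1:ℝ)^(n-r) = (-1)^(n-r) * ((-1)^r * (-1)^r) := by rw [h2, mul_one]
    _ = ((-1)^(n-r) * (-1)^r) * (-1)^r := by ring
    _ = (-1)^n * (-1)^r := by rw [h1]

private lemma alt_sum_powerset {ι : Type*} [DecidableEq ι] (U : Finset ι) :
    ∑ R ∈ U.powerset, (-1:ℝ)^(U.card - R.card) = if U = ∅ then 1 else 0 := by
  have hc : ∀ R ∈ U.powerset, (-1:ℝ)^(U.card - R.card) = (-1)^U.card * (-1)^R.card :=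
    fun R hR => neg_one_pow_sub_real (card_le_card (mem_powerset.1 hR))
  rw [Finset.sum_congr rfl hc, ← Finset.mul_sum]
  have hz : ∑ R ∈ U.powerset, (-1:ℝ)^R.card = if U = ∅ then 1 else 0 := by
    have h := congrArg (fun z : ℤ => (z : ℝ)) (Finset.sum_powerset_neg_one_pow_card (x := U))
    push_cast at h
    simpa using h
  rw [hz]
  split_ifs with h
  · subst h; simp
  · simp

private lemma ie_lemma {k : ℕ} (T : Finset (Fin k)) :
    ∑ S ∈ (Finset.univ : Finset (Fin k)).powerset.filter (fun S => T ⊆ S),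
      (-1:ℝ)^(k - S.card) = if T = Finset.univ then 1 else 0 := by
  have key : ∑ S ∈ (Finset.univ : Finset (Fin k)).powerset.filter (fun S => T ⊆ S),
      (-1:ℝ)^(k - S.card) = ∑ R ∈ Tᶜ.powerset, (-1:ℝ)^(Tᶜ.card - R.card) := by
    refine Finset.sum_bij' (fun S _ => S \ T) (fun R _ => R ∪ T) ?_ ?_ ?_ ?_ ?_
    · intro S hS
      rw [mem_filter] at hS
      rw [mem_powerset]
      intro x hx
      rw [mem_sdiff] at hx
      simpa [mem_compl] using hx.2
    · intro R hR
      rw [mem_powerset] at hR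
      rw [mem_filter, mem_powerset]
      exact ⟨subset_univ _, subset_union_right⟩
    · intro S hS
      rw [mem_filter] at hS
      exact sdiff_union_of_subset hS.2
    · intro R hR
      rw [mem_powerset] at hR
      show (R ∪ T) \ T = R
      rw [union_sdiff_right, Finset.sdiff_eq_self_iff_disjoint]
      exact Finset.disjoint_left.2 fun a haR haT => by
        have := hR haR; simp [mem_compl, haT] at this
    · intro S hS
      rw [mem_filter, mem_powerset] at hS
      show ((-1:ℝ))^(k - S.card) = (-1)^(Tᶜ.card - (S \ T).card)
      have h1 : (S \ T).card = S.card - T.card := card_sdiff_of_subset hS.2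
      have h2 : Tᶜ.card = k - T.card := by
        rw [card_compl]; simp
      have h3 : T.card ≤ S.card := card_le_card hS.2
      have h4 : S.card ≤ k := by simpa using card_le_card hS.1
      congr 1
      omega
  rw [key, alt_sum_powerset]
  simp only [compl_eq_empty_iff]

/-- Polarization identity. -/
private lemma polar (k : ℕ) (y : Fin k → ℝ) :
    ∑ S ∈ (Finset.univ : Finset (Fin k)).powerset,
        (-1:ℝ)^(k - S.card) * (∑ m ∈ S, y m)^k
      = (k.factorial : ℝ) * ∏ m, y m := by
  classical
  have step1 : ∀ S : Finset (Fin k), (∑ m ∈ S, y m)^k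
      = ∑ p : Fin k → Fin k, if ∀ i, p i ∈ S then ∏ i, y (p i) else 0 := by
    intro S
    rw [Finset.sum_pow']
    have hset : Fintype.piFinset (fun _ : Fin k => S)
        = Finset.univ.filter (fun p : Fin k → Fin k => ∀ i, p i ∈ S) := by
      ext p; simp [Fintype.mem_piFinset]
    rw [hset, Finset.sum_filter]
  calc ∑ S ∈ (Finset.univ : Finset (Fin k)).powerset,
        (-1:ℝ)^(k - S.card) * (∑ m ∈ S, y m)^k
      = ∑ S ∈ (Finset.univ : Finset (Fin k)).powerset, ∑ p : Fin k → Fin k,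
          (if ∀ i, p i ∈ S then (-1:ℝ)^(k - S.card) * ∏ i, y (p i) else 0) := by
        refine Finset.sum_congr rfl fun S _ => ?_
        rw [step1, Finset.mul_sum]
        exact Finset.sum_congr rfl fun p _ => by rw [mul_ite, mul_zero]
    _ = ∑ p : Fin k → Fin k, ∑ S ∈ (Finset.univ : Finset (Fin k)).powerset,
          (if ∀ i, p i ∈ S then (-1:ℝ)^(k - S.card) * ∏ i, y (p i) else 0) :=
        Finset.sum_comm
    _ = ∑ p : Fin k → Fin k,
          (if Function.Surjective p then ∏ i, y (p i) else 0) := by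
        refine Finset.sum_congr rfl fun p _ => ?_
        have hcond : ∀ S : Finset (Fin k), (∀ i, p i ∈ S) ↔ Finset.image p Finset.univ ⊆ S := by
          intro S; rw [Finset.image_subset_iff]; simp
        have hstep : ∑ S ∈ (Finset.univ : Finset (Fin k)).powerset,
            (if ∀ i, p i ∈ S then (-1:ℝ)^(k - S.card) * ∏ i, y (p i) else 0)
            = (∑ S ∈ (Finset.univ : Finset (Fin k)).powerset.filter
                (fun S => Finset.image p Finset.univ ⊆ S), (-1:ℝ)^(k - S.card)) * ∏ i, y (p i) := by
          rw [Finset.sum_mul, Finset.sum_filter]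
          refine Finset.sum_congr rfl fun S _ => ?_
          rw [if_congr (hcond S) rfl rfl]
        rw [hstep, ie_lemma]
        have hsurj : Finset.image p Finset.univ = Finset.univ ↔ Function.Surjective p := by
          constructor
          · intro h b
            have hb : b ∈ Finset.image p Finset.univ := by rw [h]; exact Finset.mem_univ b
            obtain ⟨a, _, ha⟩ := Finset.mem_image.1 hb
            exact ⟨a, ha⟩
          · intro h
            exact Finset.eq_univ_of_forall fun b => Finset.mem_image.2
              ⟨(h b).choose, Finset.mem_univ _, (h b).choose_spec⟩
        split_ifs with h1 h2 h2
        · rw [one_mul]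
        · exact absurd (hsurj.1 h1) h2
        · exact absurd (hsurj.2 h2) h1
        · rw [zero_mul]
    _ = ∑ p ∈ Finset.univ.filter (fun p : Fin k → Fin k => Function.Surjective p),
          ∏ i, y (p i) := by rw [Finset.sum_filter]
    _ = ∑ _σ : Equiv.Perm (Fin k), ∏ m, y m := by
        refine Finset.sum_bij' (fun p hp => Equiv.ofBijective p
            (Function.Surjective.bijective_of_finite (Finset.mem_filter.1 hp).2))
          (fun σ _ => ⇑σ) ?_ ?_ ?_ ?_ ?_
        · intro p hp; exact Finset.mem_univ _
        · intro σ _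
          exact Finset.mem_filter.2 ⟨Finset.mem_univ _, σ.surjective⟩
        · intro p hp; rfl
        · intro σ _; ext x; rfl
        · intro p hp
          exact (Function.Surjective.bijective_of_finite
            (Finset.mem_filter.1 hp).2).prod_comp y
    _ = (k.factorial : ℝ) * ∏ m, y m := by
        rw [Finset.sum_const, Finset.card_univ, Fintype.card_perm, Fintype.card_fin,
          nsmul_eq_mul]

theorem span_powers_of_linear_forms_eq_homogeneous_polynomials (d k : ℕ)
    (hd : 1 ≤ d) (hk : 1 ≤ k) :
    Submodule.span ℝ
        {p : (Fin d → ℝ) → ℝ | ∃ a : Fin d → ℝ, p = fun x => (∑ i, a i * x i) ^ k}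
      = Submodule.span ℝ
        {p : (Fin d → ℝ) → ℝ |
          ∃ β : Fin d → ℕ, (∑ i, β i) = k ∧ p = fun x => ∏ i, x i ^ β i} := by
  classical
  apply le_antisymm
  · -- powers of linear forms are combinations of monomials
    rw [Submodule.span_le]
    rintro p ⟨a, rfl⟩
    have expand : (fun x : Fin d → ℝ => (∑ i, a i * x i) ^ k)
        = ∑ f : Fin k → Fin d, (∏ j, a (f j)) • (fun x : Fin d → ℝ => ∏ j, x (f j)) := by
      funext x
      rw [Finset.sum_apply]
      rw [Finset.sum_pow']
      simp only [Fintype.piFinset_univ]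
      refine Finset.sum_congr rfl fun f _ => ?_
      simp only [Pi.smul_apply, smul_eq_mul]
      rw [← Finset.prod_mul_distrib]
    rw [SetLike.mem_coe, expand]
    refine Submodule.sum_mem _ fun f _ => Submodule.smul_mem _ _ (Submodule.subset_span ?_)
    refine ⟨fun i => (Finset.univ.filter (fun j => f j = i)).card, ?_, ?_⟩
    · show ∑ i, (Finset.univ.filter (fun j => f j = i)).card = k
      have hc : ∑ i, (Finset.univ.filter (fun j => f j = i)).card
          = (Finset.univ : Finset (Fin k)).card :=
        (Finset.card_eq_sum_card_fiberwise (fun j _ => Finset.mem_univ (f j))).symm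
      rw [hc, Finset.card_univ, Fintype.card_fin]
    · funext x
      show ∏ j, x (f j) = ∏ i, x i ^ (Finset.univ.filter (fun j => f j = i)).card
      rw [← Finset.prod_fiberwise_of_maps_to (fun j _ => Finset.mem_univ (f j))
        (fun j => x (f j))]
      refine Finset.prod_congr rfl fun i _ => ?_
      have hp : ∏ j ∈ Finset.univ.filter (fun j => f j = i), x (f j)
          = ∏ _j ∈ Finset.univ.filter (fun j => f j = i), x i :=
        Finset.prod_congr rfl fun j hj => by rw [(Finset.mem_filter.1 hj).2]
      rw [hp, Finset.prod_const]
  · -- monomials are combinations of powers of linear forms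
    rw [Submodule.span_le]
    rintro p ⟨β, hβ, rfl⟩
    have hcard : Fintype.card (Σ i : Fin d, Fin (β i)) = Fintype.card (Fin k) := by
      simp [hβ]
    let e : Fin k ≃ Σ i : Fin d, Fin (β i) := (Fintype.equivOfCardEq hcard).symm
    let t : Fin k → Fin d := fun m => (e m).1
    have hmon : (fun x : Fin d → ℝ => ∏ i, x i ^ β i)
        = fun x : Fin d → ℝ => ∏ m, x (t m) := by
      funext x
      have h1 : ∏ m, x (t m) = ∏ s : Σ i : Fin d, Fin (β i), x s.1 :=
        Equiv.prod_comp e (fun s : Σ i : Fin d, Fin (β i) => x s.1)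
      rw [h1, ← Finset.univ_sigma_univ, Finset.prod_sigma]
      simp
    rw [SetLike.mem_coe, hmon]
    have key : (fun x : Fin d → ℝ => ∏ m, x (t m))
        = ∑ S ∈ (Finset.univ : Finset (Fin k)).powerset,
            ((k.factorial : ℝ)⁻¹ * (-1:ℝ)^(k - S.card)) •
              (fun x : Fin d → ℝ =>
                (∑ i, ((S.filter (fun m => t m = i)).card : ℝ) * x i) ^ k) := by
      funext x
      rw [Finset.sum_apply]
      have hlin : ∀ S : Finset (Fin k),
          (∑ i, ((S.filter (fun m => t m = i)).card : ℝ) * x i) = ∑ m ∈ S, x (t m) := by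
        intro S
        have h1 : ∀ i : Fin d, ((S.filter (fun m => t m = i)).card : ℝ) * x i
            = ∑ m ∈ S, if t m = i then x i else 0 := by
          intro i
          rw [Finset.sum_ite, Finset.sum_const, Finset.sum_const_zero, add_zero, nsmul_eq_mul]
        rw [Finset.sum_congr rfl fun i _ => h1 i, Finset.sum_comm]
        refine Finset.sum_congr rfl fun m _ => ?_
        rw [Finset.sum_ite_eq]
        simp
      calc ∏ m, x (t m)
          = (k.factorial : ℝ)⁻¹ * ((k.factorial : ℝ) * ∏ m, x (t m)) := by
            rw [← mul_assoc, inv_mul_cancel₀ (by positivity), one_mul]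
        _ = (k.factorial : ℝ)⁻¹ * ∑ S ∈ (Finset.univ : Finset (Fin k)).powerset,
              (-1:ℝ)^(k - S.card) * (∑ m ∈ S, x (t m))^k := by
            rw [polar k (fun m => x (t m))]
        _ = ∑ S ∈ (Finset.univ : Finset (Fin k)).powerset,
              ((k.factorial : ℝ)⁻¹ * (-1:ℝ)^(k - S.card)) •
                (fun x : Fin d → ℝ =>
                  (∑ i, ((S.filter (fun m => t m = i)).card : ℝ) * x i) ^ k) x := by
            rw [Finset.mul_sum]
            refine Finset.sum_congr rfl fun S _ => ?_
            simp only [smul_eq_mul]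
            rw [hlin S]
            ring
    rw [key]
    exact Submodule.sum_mem _ fun S _ => Submodule.smul_mem _ _ (Submodule.subset_span
      ⟨fun i => ((S.filter (fun m => t m = i)).card : ℝ), rfl⟩)
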